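/- (Splitting Lemma) For simple valuations ζ = Σ_{b∈B} r_b η_b and ξ = Σ_{c∈C} s_c η_c on a T0 space X, ζ ≤ ξ pointwise on open sets if and only if there exist nonnegative reals t_{b,c} (b∈B, c∈C) with Σ_{c∈C} t_{b,c} = r_b for all b, Σ_{b∈B} t_{b,c} ≤ s_c for all c, and t_{b,c} ≠ 0 implies b ⊑ c in the specialization order. -/

import Mathlib

open Set

/-- The specialization order on a topological space: `x ⊑ y` iff `x ∈ closure {y}`. -/
def sOrd (X : Type*) [TopologicalSpace X] (x y : X) : Prop := x ∈ closure {y}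

/-- A directed subset `D`, viewed as a net indexed by itself, converges to `x`:
it is eventually in every open neighborhood of `x`. -/
def dconv (X : Type*) [TopologicalSpace X] (D : Set X) (x : X) : Prop :=
  D.Nonempty ∧ DirectedOn (sOrd X) D ∧
    ∀ U : Set X, IsOpen U → x ∈ U → ∃ d ∈ D, ∀ e ∈ D, sOrd X d e → e ∈ U

/-- A subset `U` is directed open if every directed net converging to a point of `U`
meets `U`. -/
def dOpen (X : Type*) [TopologicalSpace X] (U : Set X) : Prop :=
  ∀ D x, dconv X D x → x ∈ U → (D ∩ U).Nonempty

open scoped ENNReal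
open Classical in
/-- The point valuation `η_x`: `η_x U = 1` if `x ∈ U`, else `0`. -/
noncomputable def pv {X : Type*} (x : X) (U : Set X) : ℝ≥0∞ :=
  if x ∈ U then 1 else 0

open Classical in
/-- The simple valuation `Σ_{b ∈ B} r b · η_b`. -/
noncomputable def simpleVal {X : Type*} (B : Finset X) (r : X → ℝ≥0∞) (U : Set X) : ℝ≥0∞ :=
  ∑ b ∈ B, if b ∈ U then r b else 0

open Classical

section Gale
variable {α : Type*} [DecidableEq α]

/-- neighbors of `A` in `C` under relation `R`. -/
noncomputable def nbr (R : α → α → Prop) (C A : Finset α) : Finset α :=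
  C.filter (fun c => ∃ b ∈ A, R b c)

lemma nbr_mono (R : α → α → Prop) (C : Finset α) {A A' : Finset α} (h : A ⊆ A') :
    nbr R C A ⊆ nbr R C A' := by
  intro c hc
  simp only [nbr, Finset.mem_filter] at *
  obtain ⟨hcC, b, hb, hR⟩ := hc
  exact ⟨hcC, b, h hb, hR⟩

lemma nbr_subset (R : α → α → Prop) (C A : Finset α) : nbr R C A ⊆ C :=
  Finset.filter_subset _ _

lemma nbr_union (R : α → α → Prop) (C A A' : Finset α) :
    nbr R C (A ∪ A') = nbr R C A ∪ nbr R C A' := by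
  ext c
  simp only [nbr, Finset.mem_filter, Finset.mem_union]
  constructor
  · rintro ⟨hc, b, hb | hb, hR⟩
    · exact Or.inl ⟨hc, b, hb, hR⟩
    · exact Or.inr ⟨hc, b, hb, hR⟩
  · rintro (⟨hc, b, hb, hR⟩ | ⟨hc, b, hb, hR⟩)
    · exact ⟨hc, b, Or.inl hb, hR⟩
    · exact ⟨hc, b, Or.inr hb, hR⟩

noncomputable def galeFlag (R : α → α → Prop) (C B : Finset α) (r s : α → ℝ) : ℕ :=
  if ∃ A ⊆ B, A.Nonempty ∧ A ≠ B ∧ ∑ b ∈ A, r b = ∑ c ∈ nbr R C A, s c then 0 else 1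

noncomputable def galeM (R : α → α → Prop) (C B : Finset α) (r s : α → ℝ) : ℕ :=
  (2 * C.card + 2) * B.card + 2 * (C.filter (fun c => s c ≠ 0)).card + galeFlag R C B r s

lemma galeM_le (R : α → α → Prop) (C B : Finset α) (r s : α → ℝ) :
    galeM R C B r s ≤ (2 * C.card + 2) * B.card + 2 * C.card + 1 := by
  unfold galeM galeFlag
  have h1 : (C.filter (fun c => s c ≠ 0)).card ≤ C.card := Finset.card_filter_le _ _
  set P := (2 * C.card + 2) * B.card with hP
  split <;> omega

lemma galeM_card_lt (R : α → α → Prop) (C : Finset α) {B B' : Finset α} (r s r' s' : α → ℝ)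
    (h : B'.card < B.card) : galeM R C B' r' s' < galeM R C B r s := by
  have h1 := galeM_le R C B' r' s'
  have h3 : (2 * C.card + 2) * (B'.card + 1) ≤ (2 * C.card + 2) * B.card :=
    Nat.mul_le_mul_left _ h
  have h2 : (2 * C.card + 2) * B.card ≤ galeM R C B r s := by
    unfold galeM; omega
  have h4 : (2 * C.card + 2) * (B'.card + 1) = (2 * C.card + 2) * B'.card + (2 * C.card + 2) := by
    ring
  set Q := (2 * C.card + 2) * B'.card with hQ
  set P := (2 * C.card + 2) * B.card with hP
  omega

lemma gale_aux (R : α → α → Prop) (C : Finset α) :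
    ∀ n (B : Finset α) (r s : α → ℝ), galeM R C B r s ≤ n →
    (∀ b ∈ B, 0 ≤ r b) → (∀ c ∈ C, 0 ≤ s c) →
    (∀ A ⊆ B, ∑ b ∈ A, r b ≤ ∑ c ∈ nbr R C A, s c) →
    ∃ t : α → α → ℝ, (∀ b c, 0 ≤ t b c) ∧ (∀ b ∈ B, ∑ c ∈ C, t b c = r b) ∧
      (∀ c ∈ C, ∑ b ∈ B, t b c ≤ s c) ∧ (∀ b c, t b c ≠ 0 → R b c) := by
  intro n
  induction n with
  | zero =>
    intro B r s hM hr hs hall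
    exfalso
    have h0 : galeM R C B r s = 0 := Nat.le_zero.1 hM
    unfold galeM at h0
    set P := (2 * C.card + 2) * B.card with hP
    have hB : B = ∅ := by
      by_contra h
      have h1 : 1 ≤ B.card := Finset.card_pos.2 (Finset.nonempty_iff_ne_empty.2 h)
      have h2 : (2 * C.card + 2) * 1 ≤ P := Nat.mul_le_mul_left _ h1
      omega
    have hfl : galeFlag R C B r s = 1 := by
      unfold galeFlag
      rw [if_neg]
      rintro ⟨A, hA, hne, -⟩
      subst hB
      exact hne.ne_empty (Finset.subset_empty.1 hA)
    omega
  | succ n ih =>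
    intro B r s hM hr hs hall
    rcases eq_or_ne B ∅ with hB | hB
    · -- empty case
      subst hB
      exact ⟨fun _ _ => 0, fun _ _ => le_refl 0, fun b hb => absurd hb (Finset.notMem_empty b),
        fun c hc => by simpa using hs c hc, fun b c h => absurd rfl h⟩
    by_cases hz : ∃ b₀ ∈ B, r b₀ = 0
    · -- erase a zero row
      obtain ⟨b₀, hb₀B, hrb₀⟩ := hz
      have hcard : (B.erase b₀).card < B.card := Finset.card_erase_lt_of_mem hb₀B
      have hM' : galeM R C (B.erase b₀) r s ≤ n := by
        have := galeM_card_lt R C r s r s hcard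
        omega
      obtain ⟨t', ht0, htrow, htcol, htR⟩ := ih (B.erase b₀) r s hM'
        (fun b hb => hr b (Finset.mem_of_mem_erase hb)) hs
        (fun A hA => hall A (hA.trans (Finset.erase_subset _ _)))
      refine ⟨fun b c => if b = b₀ then 0 else t' b c, ?_, ?_, ?_, ?_⟩
      · intro b c; dsimp only; split
        · exact le_refl 0
        · exact ht0 b c
      · intro b hb
        by_cases hbb : b = b₀
        · subst hbb; simp [hrb₀]
        · simpa [hbb] using htrow b (Finset.mem_erase.2 ⟨hbb, hb⟩)
      · intro c hc
        rw [← Finset.add_sum_erase _ _ hb₀B,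
          Finset.sum_congr rfl (fun x hx => if_neg (Finset.ne_of_mem_erase hx))]
        simpa using htcol c hc
      · intro b c h
        by_cases hbb : b = b₀
        · simp [hbb] at h
        · exact htR b c (by simpa [hbb] using h)
    push_neg at hz
    have hrpos : ∀ b ∈ B, 0 < r b := fun b hb => lt_of_le_of_ne (hr b hb) (Ne.symm (hz b hb))
    by_cases htight : ∃ A ⊆ B, A.Nonempty ∧ A ≠ B ∧ ∑ b ∈ A, r b = ∑ c ∈ nbr R C A, s c
    · -- decompose along a tight set
      obtain ⟨A, hAB, hAne, hAneB, hAtight⟩ := htight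
      set s₁ : α → ℝ := fun c => if c ∈ nbr R C A then s c else 0 with hs₁
      set s₂ : α → ℝ := fun c => if c ∈ nbr R C A then 0 else s c with hs₂
      have hs₁0 : ∀ c ∈ C, 0 ≤ s₁ c := by
        intro c hc; simp only [hs₁]; split
        · exact hs c hc
        · exact le_refl 0
      have hs₂0 : ∀ c ∈ C, 0 ≤ s₂ c := by
        intro c hc; simp only [hs₂]; split
        · exact le_refl 0
        · exact hs c hc
      have hcardA : A.card < B.card := Finset.card_lt_card (hAB.ssubset_of_ne hAneB)
      have hcardBA : (B \ A).card < B.card := by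
        have h1 : (B \ A).card = B.card - A.card := Finset.card_sdiff_of_subset hAB
        have h2 : 0 < A.card := Finset.card_pos.2 hAne
        have h3 : A.card ≤ B.card := Finset.card_le_card hAB
        omega
      have hM1 : galeM R C A r s₁ ≤ n := by
        have := galeM_card_lt R C r s r s₁ hcardA; omega
      have hall1 : ∀ A' ⊆ A, ∑ b ∈ A', r b ≤ ∑ c ∈ nbr R C A', s₁ c := by
        intro A' hA'
        have hsub : nbr R C A' ⊆ nbr R C A := nbr_mono R C hA'
        have heq : ∑ c ∈ nbr R C A', s₁ c = ∑ c ∈ nbr R C A', s c :=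
          Finset.sum_congr rfl (fun c hc => by simp only [hs₁]; rw [if_pos (hsub hc)])
        rw [heq]
        exact hall A' (hA'.trans hAB)
      obtain ⟨t₁, ht₁0, ht₁row, ht₁col, ht₁R⟩ := ih A r s₁ hM1
        (fun b hb => hr b (hAB hb)) hs₁0 hall1
      have hM2 : galeM R C (B \ A) r s₂ ≤ n := by
        have := galeM_card_lt R C r s r s₂ hcardBA; omega
      have hall2 : ∀ A' ⊆ B \ A, ∑ b ∈ A', r b ≤ ∑ c ∈ nbr R C A', s₂ c := by
        intro A' hA'
        have hdisj : Disjoint A A' := (Finset.sdiff_disjoint.mono_left hA').symm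
        have hAA' : A ∪ A' ⊆ B := Finset.union_subset hAB (hA'.trans Finset.sdiff_subset)
        have hsum : ∑ b ∈ A ∪ A', r b = ∑ b ∈ A, r b + ∑ b ∈ A', r b := Finset.sum_union hdisj
        have hU := hall (A ∪ A') hAA'
        rw [nbr_union] at hU
        have hsplit : ∑ c ∈ nbr R C A ∪ nbr R C A', s c
            = ∑ c ∈ nbr R C A, s c + ∑ c ∈ nbr R C A' \ nbr R C A, s c := by
          rw [← Finset.union_sdiff_self_eq_union, Finset.sum_union Finset.disjoint_sdiff]
        have hle : ∑ c ∈ nbr R C A' \ nbr R C A, s c ≤ ∑ c ∈ nbr R C A', s₂ c := by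
          have heq : ∑ c ∈ nbr R C A' \ nbr R C A, s c
              = ∑ c ∈ nbr R C A' \ nbr R C A, s₂ c :=
            Finset.sum_congr rfl (fun c hc => by
              simp only [hs₂]; rw [if_neg (Finset.mem_sdiff.1 hc).2])
          rw [heq]
          exact Finset.sum_le_sum_of_subset_of_nonneg Finset.sdiff_subset
            (fun c hc _ => hs₂0 c (nbr_subset R C A' hc))
        linarith
      obtain ⟨t₂, ht₂0, ht₂row, ht₂col, ht₂R⟩ := ih (B \ A) r s₂ hM2
        (fun b hb => hr b (Finset.sdiff_subset hb)) hs₂0 hall2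
      refine ⟨fun b c => if b ∈ A then t₁ b c else t₂ b c, ?_, ?_, ?_, ?_⟩
      · intro b c; dsimp only; split
        · exact ht₁0 b c
        · exact ht₂0 b c
      · intro b hb
        by_cases hbA : b ∈ A
        · simp only [if_pos hbA]; exact ht₁row b hbA
        · simp only [if_neg hbA]; exact ht₂row b (Finset.mem_sdiff.2 ⟨hb, hbA⟩)
      · intro c hc
        have hsplitB : ∑ b ∈ B, (if b ∈ A then t₁ b c else t₂ b c)
            = ∑ b ∈ B \ A, t₂ b c + ∑ b ∈ A, t₁ b c := by
          rw [← Finset.sum_sdiff hAB]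
          congr 1
          · exact Finset.sum_congr rfl (fun b hb => if_neg (Finset.mem_sdiff.1 hb).2)
          · exact Finset.sum_congr rfl (fun b hb => if_pos hb)
        have h12 : s₁ c + s₂ c = s c := by
          simp only [hs₁, hs₂]; split <;> ring
        have := ht₁col c hc
        have := ht₂col c hc
        rw [hsplitB]
        linarith
      · intro b c h
        dsimp only at h
        by_cases hbA : b ∈ A
        · exact ht₁R b c (by rwa [if_pos hbA] at h)
        · exact ht₂R b c (by rwa [if_neg hbA] at h)
    · -- push flow from some b₀ to some c₀
      obtain ⟨b₀, hb₀B⟩ := Finset.nonempty_iff_ne_empty.2 hB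
      have hrb₀ : 0 < r b₀ := hrpos b₀ hb₀B
      have h1 : r b₀ ≤ ∑ c ∈ nbr R C {b₀}, s c := by
        have := hall {b₀} (Finset.singleton_subset_iff.2 hb₀B)
        simpa using this
      have hc₀ex : ∃ c₀ ∈ nbr R C {b₀}, 0 < s c₀ := by
        by_contra h
        push_neg at h
        have : ∑ c ∈ nbr R C {b₀}, s c ≤ 0 := Finset.sum_nonpos h
        linarith
      obtain ⟨c₀, hc₀N, hsc₀⟩ := hc₀ex
      have hc₀C : c₀ ∈ C := nbr_subset R C _ hc₀N
      have hRb₀c₀ : R b₀ c₀ := by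
        have := (Finset.mem_filter.1 hc₀N).2
        simpa using this
      set S : Finset (Finset α) :=
        B.powerset.filter (fun A => A.Nonempty ∧ b₀ ∉ A ∧ c₀ ∈ nbr R C A) with hS
      set D : Finset ℝ :=
        insert (r b₀) (insert (s c₀)
          (S.image (fun A => ∑ c ∈ nbr R C A, s c - ∑ b ∈ A, r b))) with hD
      have hDne : D.Nonempty := ⟨r b₀, by simp [hD]⟩
      set δ := D.min' hDne with hδdef
      have hδ_le : ∀ x ∈ D, δ ≤ x := fun x hx => Finset.min'_le D x hx
      have hδr : δ ≤ r b₀ := hδ_le _ (by simp [hD])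
      have hδs : δ ≤ s c₀ := hδ_le _ (by simp [hD])
      have hδslack : ∀ A ∈ S, δ ≤ ∑ c ∈ nbr R C A, s c - ∑ b ∈ A, r b := by
        intro A hA
        refine hδ_le _ ?_
        rw [hD]
        exact Finset.mem_insert_of_mem (Finset.mem_insert_of_mem (Finset.mem_image_of_mem _ hA))
      have hSfacts : ∀ A ∈ S, A ⊆ B ∧ A.Nonempty ∧ b₀ ∉ A ∧ c₀ ∈ nbr R C A := by
        intro A hA
        simp only [hS, Finset.mem_filter, Finset.mem_powerset] at hA
        exact ⟨hA.1, hA.2.1, hA.2.2.1, hA.2.2.2⟩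
      have hδpos : 0 < δ := by
        rw [hδdef, Finset.lt_min'_iff]
        intro x hx
        simp only [hD, Finset.mem_insert, Finset.mem_image] at hx
        rcases hx with rfl | rfl | ⟨A, hA, rfl⟩
        · exact hrb₀
        · exact hsc₀
        · obtain ⟨hAB, hAne, hb₀A, hc₀A⟩ := hSfacts A hA
          have hAneB : A ≠ B := fun h => hb₀A (h ▸ hb₀B)
          have hle := hall A hAB
          have hne : ∑ b ∈ A, r b ≠ ∑ c ∈ nbr R C A, s c :=
            fun h => htight ⟨A, hAB, hAne, hAneB, h⟩
          have := lt_of_le_of_ne hle hne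
          linarith
      set s' : α → ℝ := fun c => if c = c₀ then s c₀ - δ else s c with hs'
      have hs'0 : ∀ c ∈ C, 0 ≤ s' c := by
        intro c hc; simp only [hs']; split
        · linarith
        · exact hs c hc
      have hs'sum : ∀ E : Finset α, c₀ ∈ E → ∑ c ∈ E, s' c = ∑ c ∈ E, s c - δ := by
        intro E hE
        rw [← Finset.add_sum_erase _ s' hE, ← Finset.add_sum_erase _ s hE]
        have heq : ∑ c ∈ E.erase c₀, s' c = ∑ c ∈ E.erase c₀, s c :=
          Finset.sum_congr rfl (fun c hc => by
            simp only [hs']; rw [if_neg (Finset.ne_of_mem_erase hc)])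
        rw [heq]
        simp only [hs', if_pos rfl]
        ring
      have hs'eq : ∀ E : Finset α, c₀ ∉ E → ∑ c ∈ E, s' c = ∑ c ∈ E, s c := by
        intro E hE
        exact Finset.sum_congr rfl (fun c hc => by
          simp only [hs']; rw [if_neg (by rintro rfl; exact hE hc)])
      have hflag_old : galeFlag R C B r s = 1 := if_neg htight
      have hsupp_mono : ∀ c, s' c ≠ 0 → s c ≠ 0 := by
        intro c h
        by_cases hcc : c = c₀
        · subst hcc; exact ne_of_gt hsc₀
        · simp only [hs'] at h; rwa [if_neg hcc] at h
      by_cases hcase1 : δ = r b₀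
      · -- full push, remove b₀
        have hM' : galeM R C (B.erase b₀) r s' ≤ n := by
          have := galeM_card_lt R C r s r s' (Finset.card_erase_lt_of_mem hb₀B)
          omega
        have hall' : ∀ A ⊆ B.erase b₀, ∑ b ∈ A, r b ≤ ∑ c ∈ nbr R C A, s' c := by
          intro A hA
          have hAB : A ⊆ B := hA.trans (Finset.erase_subset _ _)
          by_cases hc₀A : c₀ ∈ nbr R C A
          · have hAne : A.Nonempty := by
              obtain ⟨b, hb, -⟩ := (Finset.mem_filter.1 hc₀A).2
              exact ⟨b, hb⟩
            have hAS : A ∈ S := by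
              simp only [hS, Finset.mem_filter, Finset.mem_powerset]
              exact ⟨hAB, hAne, fun h => (Finset.mem_erase.1 (hA h)).1 rfl, hc₀A⟩
            have h2 := hδslack A hAS
            rw [hs'sum _ hc₀A]
            linarith
          · rw [hs'eq _ hc₀A]
            exact hall A hAB
        obtain ⟨t', ht0, htrow, htcol, htR⟩ := ih (B.erase b₀) r s' hM'
          (fun b hb => hr b (Finset.mem_of_mem_erase hb)) hs'0 hall'
        refine ⟨fun b c => if b = b₀ then (if c = c₀ then δ else 0) else t' b c, ?_, ?_, ?_, ?_⟩
        · intro b c; dsimp only; split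
          · split
            · exact le_of_lt hδpos
            · exact le_refl 0
          · exact ht0 b c
        · intro b hb
          by_cases hbb : b = b₀
          · rw [hbb]
            rw [Finset.sum_congr rfl (fun x _ => if_pos rfl),
              Finset.sum_ite_eq' C c₀ (fun _ => δ), if_pos hc₀C]
            exact hcase1
          · rw [Finset.sum_congr rfl (fun x _ => if_neg hbb)]
            exact htrow b (Finset.mem_erase.2 ⟨hbb, hb⟩)
        · intro c hc
          rw [← Finset.add_sum_erase _ _ hb₀B,
            Finset.sum_congr rfl (fun x hx => if_neg (Finset.ne_of_mem_erase hx))]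
          dsimp only
          rw [if_pos rfl]
          have hcol := htcol c hc
          simp only [hs'] at hcol
          by_cases hcc : c = c₀
          · rw [hcc] at hcol ⊢
            rw [if_pos rfl] at hcol ⊢
            linarith
          · rw [if_neg hcc] at hcol ⊢
            linarith
        · intro b c h
          dsimp only at h
          by_cases hbb : b = b₀
          · subst hbb; rw [if_pos rfl] at h
            by_cases hcc : c = c₀
            · subst hcc; exact hRb₀c₀
            · rw [if_neg hcc] at h; exact absurd rfl h
          · exact htR b c (by rwa [if_neg hbb] at h)
      · -- partial push: decrease r b₀ and s c₀ by δ, recurse on same B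
        set r' : α → ℝ := fun b => if b = b₀ then r b₀ - δ else r b with hr'
        have hr'0 : ∀ b ∈ B, 0 ≤ r' b := by
          intro b hb; simp only [hr']; split
          · linarith
          · exact hr b hb
        have hr'sum : ∀ E : Finset α, b₀ ∈ E → ∑ b ∈ E, r' b = ∑ b ∈ E, r b - δ := by
          intro E hE
          rw [← Finset.add_sum_erase _ r' hE, ← Finset.add_sum_erase _ r hE]
          have heq : ∑ b ∈ E.erase b₀, r' b = ∑ b ∈ E.erase b₀, r b :=
            Finset.sum_congr rfl (fun b hb => by
              simp only [hr']; rw [if_neg (Finset.ne_of_mem_erase hb)])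
          rw [heq]
          simp only [hr', if_pos rfl]
          ring
        have hr'eq : ∀ E : Finset α, b₀ ∉ E → ∑ b ∈ E, r' b = ∑ b ∈ E, r b := by
          intro E hE
          exact Finset.sum_congr rfl (fun b hb => by
            simp only [hr']; rw [if_neg (by rintro rfl; exact hE hb)])
        have hall' : ∀ A ⊆ B, ∑ b ∈ A, r' b ≤ ∑ c ∈ nbr R C A, s' c := by
          intro A hA
          by_cases hb₀A : b₀ ∈ A
          · have hc₀A : c₀ ∈ nbr R C A :=
              Finset.mem_filter.2 ⟨hc₀C, ⟨b₀, hb₀A, hRb₀c₀⟩⟩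
            rw [hr'sum A hb₀A, hs'sum _ hc₀A]
            have := hall A hA
            linarith
          · rw [hr'eq A hb₀A]
            by_cases hc₀A : c₀ ∈ nbr R C A
            · have hAne : A.Nonempty := by
                obtain ⟨b, hb, -⟩ := (Finset.mem_filter.1 hc₀A).2
                exact ⟨b, hb⟩
              have hAS : A ∈ S := by
                simp only [hS, Finset.mem_filter, Finset.mem_powerset]
                exact ⟨hA, hAne, hb₀A, hc₀A⟩
              have h2 := hδslack A hAS
              rw [hs'sum _ hc₀A]
              linarith
            · rw [hs'eq _ hc₀A]
              exact hall A hA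
        have hM' : galeM R C B r' s' ≤ n := by
          by_cases hcase2 : δ = s c₀
          · -- column c₀ gets zeroed
            have hc₀supp : c₀ ∈ C.filter (fun c => s c ≠ 0) :=
              Finset.mem_filter.2 ⟨hc₀C, ne_of_gt hsc₀⟩
            have hsub : C.filter (fun c => s' c ≠ 0)
                ⊆ (C.filter (fun c => s c ≠ 0)).erase c₀ := by
              intro c hcmem
              obtain ⟨hcC, hcne⟩ := Finset.mem_filter.1 hcmem
              have hcc : c ≠ c₀ := by
                rintro rfl
                apply hcne
                simp only [hs', if_pos rfl]
                rw [← hcase2]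
                ring
              exact Finset.mem_erase.2 ⟨hcc, Finset.mem_filter.2 ⟨hcC, hsupp_mono c hcne⟩⟩
            have hcard := Finset.card_le_card hsub
            rw [Finset.card_erase_of_mem hc₀supp] at hcard
            have hpos : 0 < (C.filter (fun c => s c ≠ 0)).card :=
              Finset.card_pos.2 ⟨c₀, hc₀supp⟩
            have hfl' : galeFlag R C B r' s' ≤ 1 := by
              unfold galeFlag; split <;> omega
            unfold galeM at hM ⊢
            rw [hflag_old] at hM
            set P := (2 * C.card + 2) * B.card with hP
            omega
          · -- a new tight set appears
            have hδmem : δ ∈ D := Finset.min'_mem D hDne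
            have : δ = r b₀ ∨ δ = s c₀ ∨
                ∃ A ∈ S, ∑ c ∈ nbr R C A, s c - ∑ b ∈ A, r b = δ := by
              simpa only [hD, Finset.mem_insert, Finset.mem_image, eq_comm] using hδmem
            rcases this with h | h | ⟨A, hAS, hslackA⟩
            · exact absurd h hcase1
            · exact absurd h hcase2
            obtain ⟨hAB, hAne, hb₀A, hc₀A⟩ := hSfacts A hAS
            have hAneB : A ≠ B := fun h => hb₀A (h ▸ hb₀B)
            have htight' : ∃ A' ⊆ B, A'.Nonempty ∧ A' ≠ B ∧
                ∑ b ∈ A', r' b = ∑ c ∈ nbr R C A', s' c := by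
              refine ⟨A, hAB, hAne, hAneB, ?_⟩
              rw [hr'eq A hb₀A, hs'sum _ hc₀A]
              linarith
            have hfl' : galeFlag R C B r' s' = 0 := if_pos htight'
            have hsub : C.filter (fun c => s' c ≠ 0) ⊆ C.filter (fun c => s c ≠ 0) := by
              intro c hcmem
              obtain ⟨hcC, hcne⟩ := Finset.mem_filter.1 hcmem
              exact Finset.mem_filter.2 ⟨hcC, hsupp_mono c hcne⟩
            have hcard := Finset.card_le_card hsub
            unfold galeM at hM ⊢
            rw [hflag_old] at hM
            rw [hfl']
            set P := (2 * C.card + 2) * B.card with hP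
            omega
        obtain ⟨t', ht0, htrow, htcol, htR⟩ := ih B r' s' hM' hr'0 hs'0 hall'
        refine ⟨fun b c => t' b c + (if b = b₀ then (if c = c₀ then δ else 0) else 0),
          ?_, ?_, ?_, ?_⟩
        · intro b c
          refine add_nonneg (ht0 b c) ?_
          split
          · split
            · exact le_of_lt hδpos
            · exact le_refl 0
          · exact le_refl 0
        · intro b hb
          rw [Finset.sum_add_distrib]
          by_cases hbb : b = b₀
          · rw [hbb]
            rw [Finset.sum_congr rfl (fun x _ => if_pos rfl),
              Finset.sum_ite_eq' C c₀ (fun _ => δ), if_pos hc₀C]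
            have h2 : ∑ c ∈ C, t' b₀ c = r b₀ - δ := by
              have h3 := htrow b₀ (hbb ▸ hb)
              simpa [hr'] using h3
            linarith
          · rw [Finset.sum_congr rfl (fun x _ => if_neg hbb), Finset.sum_const_zero, add_zero]
            have h2 := htrow b hb
            simp only [hr'] at h2
            rwa [if_neg hbb] at h2
        · intro c hc
          rw [Finset.sum_add_distrib]
          have hcol := htcol c hc
          simp only [hs'] at hcol
          have hite : (∑ b ∈ B, if b = b₀ then (if c = c₀ then δ else 0) else 0)
              = (if c = c₀ then δ else 0) := by
            rw [Finset.sum_ite_eq' B b₀ (fun _ => if c = c₀ then δ else 0), if_pos hb₀B]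
          rw [hite]
          by_cases hcc : c = c₀
          · rw [hcc] at hcol ⊢
            rw [if_pos rfl] at hcol ⊢
            linarith
          · rw [if_neg hcc] at hcol ⊢
            linarith
        · intro b c h
          dsimp only at h
          by_cases hbb : b = b₀
          · by_cases hcc : c = c₀
            · rw [hbb, hcc]; exact hRb₀c₀
            · rw [if_pos hbb, if_neg hcc, add_zero] at h
              exact htR b c h
          · rw [if_neg hbb, add_zero] at h
            exact htR b c h

end Gale

/-- Splitting Lemma: For simple valuations `ζ = Σ_{b∈B} r_b η_b` and
`ξ = Σ_{c∈C} s_c η_c` on a T0 space `X`, `ζ ≤ ξ` pointwise on open sets iff there is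
a matrix `t_{b,c}` of nonnegative (finite) reals with `Σ_c t_{b,c} = r_b`,
`Σ_b t_{b,c} ≤ s_c`, and `t_{b,c} ≠ 0 → b ⊑ c` in the specialization order. -/
theorem stmt_10 {X : Type*} [TopologicalSpace X] [T0Space X]
    (B C : Finset X) (r s : X → ℝ≥0∞)
    (hr : ∀ b ∈ B, 0 < r b ∧ r b ≠ ⊤) (hs : ∀ c ∈ C, 0 < s c ∧ s c ≠ ⊤) :
    (∀ U : Set X, IsOpen U → simpleVal B r U ≤ simpleVal C s U) ↔
      ∃ t : X → X → ℝ≥0∞,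
        (∀ b ∈ B, ∀ c ∈ C, t b c ≠ ⊤) ∧
        (∀ b ∈ B, ∑ c ∈ C, t b c = r b) ∧
        (∀ c ∈ C, ∑ b ∈ B, t b c ≤ s c) ∧
        (∀ b ∈ B, ∀ c ∈ C, t b c ≠ 0 → sOrd X b c) := by
  classical
  constructor
  · intro h
    set r' : X → ℝ := fun b => (r b).toReal with hr'
    set s' : X → ℝ := fun c => (s c).toReal with hs'
    have hall : ∀ A ⊆ B, ∑ b ∈ A, r' b ≤ ∑ c ∈ nbr (sOrd X) C A, s' c := by
      intro A hA
      set U : Set X := (⋃ c ∈ (C \ nbr (sOrd X) C A), closure {c})ᶜ with hU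
      have hUopen : IsOpen U := by
        rw [hU, isOpen_compl_iff]
        exact isClosed_biUnion_finset (fun c _ => isClosed_closure)
      have hmem : ∀ b ∈ A, b ∈ U := by
        intro b hb
        rw [hU]
        simp only [Set.mem_compl_iff, Set.mem_iUnion, not_exists]
        rintro c hc hbc
        have hcmem : c ∈ nbr (sOrd X) C A := by
          simp only [nbr, Finset.mem_filter]
          exact ⟨(Finset.mem_sdiff.1 hc).1, ⟨b, hb, hbc⟩⟩
        exact (Finset.mem_sdiff.1 hc).2 hcmem
      have hCU : ∀ c ∈ C, c ∈ U → c ∈ nbr (sOrd X) C A := by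
        intro c hc hcU
        by_contra hne
        rw [hU] at hcU
        simp only [Set.mem_compl_iff, Set.mem_iUnion, not_exists] at hcU
        exact hcU c (Finset.mem_sdiff.2 ⟨hc, hne⟩) (subset_closure rfl)
      have h2 := h U hUopen
      have hL : ∑ b ∈ A, r b ≤ simpleVal B r U := by
        unfold simpleVal
        refine le_trans (le_of_eq (Finset.sum_congr rfl
          (fun b hb => (if_pos (hmem b hb)).symm))) (Finset.sum_le_sum_of_subset hA)
      have hR2 : simpleVal C s U ≤ ∑ c ∈ nbr (sOrd X) C A, s c := by
        unfold simpleVal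
        refine le_trans (Finset.sum_le_sum
          (g := fun c => if c ∈ nbr (sOrd X) C A then s c else 0) (fun c hc => ?_)) ?_
        · by_cases hcU : c ∈ U
          · rw [if_pos hcU, if_pos (hCU c hc hcU)]
          · rw [if_neg hcU]
            exact zero_le
        · rw [Finset.sum_ite_mem, Finset.inter_eq_right.2 (nbr_subset _ _ _)]
      have h3 : ∑ b ∈ A, r b ≤ ∑ c ∈ nbr (sOrd X) C A, s c :=
        le_trans hL (le_trans h2 hR2)
      have hfinr : ∀ b ∈ A, r b ≠ ⊤ := fun b hb => (hr b (hA hb)).2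
      have hfins : ∀ c ∈ nbr (sOrd X) C A, s c ≠ ⊤ :=
        fun c hc => (hs c (nbr_subset _ _ _ hc)).2
      rw [hr', hs']
      rw [← ENNReal.toReal_sum hfinr, ← ENNReal.toReal_sum hfins]
      exact (ENNReal.toReal_le_toReal (ENNReal.sum_ne_top.2 hfinr)
        (ENNReal.sum_ne_top.2 hfins)).2 h3
    obtain ⟨t', ht0, htrow, htcol, htR⟩ :=
      gale_aux (sOrd X) C (galeM (sOrd X) C B r' s') B r' s' le_rfl
      (fun b _ => ENNReal.toReal_nonneg) (fun c _ => ENNReal.toReal_nonneg) hall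
    refine ⟨fun b c => ENNReal.ofReal (t' b c), ?_, ?_, ?_, ?_⟩
    · intro b _ c _; exact ENNReal.ofReal_ne_top
    · intro b hb
      rw [← ENNReal.ofReal_sum_of_nonneg (fun c _ => ht0 b c), htrow b hb]
      exact ENNReal.ofReal_toReal (hr b hb).2
    · intro c hc
      rw [← ENNReal.ofReal_sum_of_nonneg (fun b _ => ht0 b c)]
      calc ENNReal.ofReal (∑ b ∈ B, t' b c) ≤ ENNReal.ofReal (s' c) :=
            ENNReal.ofReal_le_ofReal (htcol c hc)
        _ = s c := ENNReal.ofReal_toReal (hs c hc).2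
    · intro b _ c _ hne
      refine htR b c (fun h0 => hne ?_)
      simp [h0]
  · rintro ⟨t, htne, htrow, htcol, htR⟩ U hUopen
    unfold simpleVal
    have step1 : ∀ b ∈ B, (if b ∈ U then r b else 0)
        = ∑ c ∈ C, (if b ∈ U then t b c else 0) := by
      intro b hb
      by_cases hbU : b ∈ U
      · simp only [if_pos hbU]
        exact (htrow b hb).symm
      · simp [hbU]
    rw [Finset.sum_congr rfl step1, Finset.sum_comm]
    refine Finset.sum_le_sum (fun c hc => ?_)
    by_cases hcU : c ∈ U
    · rw [if_pos hcU]
      refine le_trans (Finset.sum_le_sum (fun b _ => ?_)) (htcol c hc)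
      split
      · exact le_rfl
      · exact zero_le
    · rw [if_neg hcU]
      rw [Finset.sum_eq_zero]
      intro b hb
      by_cases hbU : b ∈ U
      · rw [if_pos hbU]
        by_contra hne
        have hord : sOrd X b c := htR b hb c hc hne
        obtain ⟨x, hxU, hx⟩ := mem_closure_iff.1 hord U hUopen hbU
        rw [hx] at hxU
        exact hcU hxU
      · exact if_neg hbU
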